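/- Under Assumptions 1, 2 and 3 (Slater), for x̄ ∈ Q the following are equivalent: (1) x̄ is a solution of VI(Q, v); (2) there exists λ̄ ∈ R^R_{≥0} such that (x̄, λ̄) is a solution of VI(X × R^R_{≥0}, ṽ), where ṽ(x, λ) = ( v(x) − ∇g(x)^T λ , g(x) ). -/

import Mathlib

open scoped BigOperators
open Filter

noncomputable section

/-- The standard duality pairing on a block `ℝ^d`. -/
def pairB {d : ℕ} (x y : Fin d → ℝ) : ℝ := ∑ j, x j * y j

/-- The Euclidean norm on a block `ℝ^d`. -/
def bnorm {d : ℕ} (x : Fin d → ℝ) : ℝ := Real.sqrt (∑ j, (x j) ^ 2)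

/-- The standard duality pairing on the joint space `∏ i, ℝ^{D_i}`. -/
def pairE {N : ℕ} {Dv : Fin N → ℕ} (x y : (i : Fin N) → Fin (Dv i) → ℝ) : ℝ :=
  ∑ i, pairB (x i) (y i)

/-- The Euclidean norm on the joint space `∏ i, ℝ^{D_i}`. -/
def enormE {N : ℕ} {Dv : Fin N → ℕ} (x : (i : Fin N) → Fin (Dv i) → ℝ) : ℝ :=
  Real.sqrt (∑ i, ∑ j, (x i j) ^ 2)

/-- The Euclidean norm on `ℝ^R`. -/
def rnorm {R : ℕ} (lam : Fin R → ℝ) : ℝ := Real.sqrt (∑ r, (lam r) ^ 2)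

/-- The joint strategy set `X = ∏ i, X_i`. -/
def jointSet {N : ℕ} {Dv : Fin N → ℕ} (Xs : (i : Fin N) → Set (Fin (Dv i) → ℝ)) :
    Set ((i : Fin N) → Fin (Dv i) → ℝ) :=
  {x | ∀ i, x i ∈ Xs i}

/-- The feasible set `Q = X ∩ {x : g(x) ≤ 0}`. -/
def feasSet {N R : ℕ} {Dv : Fin N → ℕ} (Xs : (i : Fin N) → Set (Fin (Dv i) → ℝ))
    (g : ((i : Fin N) → Fin (Dv i) → ℝ) → Fin R → ℝ) :
    Set ((i : Fin N) → Fin (Dv i) → ℝ) :=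
  {x | (∀ i, x i ∈ Xs i) ∧ ∀ r, g x r ≤ 0}

/-- `∇g(x)ᵀ λ`, the weighted sum of the gradients `∇g_r(x)` with weights `λ_r`. -/
def gradT {N R : ℕ} {Dv : Fin N → ℕ}
    (Gg : ((i : Fin N) → Fin (Dv i) → ℝ) → Fin R → ((i : Fin N) → Fin (Dv i) → ℝ))
    (x : (i : Fin N) → Fin (Dv i) → ℝ) (lam : Fin R → ℝ) :
    (i : Fin N) → Fin (Dv i) → ℝ :=
  fun i j => ∑ r, lam r * Gg x r i j

/-- `(x̄, λ̄)` solves the extended variational inequality `VI(X × ℝ^R_{≥0}, ṽ)`, where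
`ṽ(x, λ) = (v(x) − ∇g(x)ᵀλ, g(x))`. -/
def extVISol {N R : ℕ} {Dv : Fin N → ℕ} (Xs : (i : Fin N) → Set (Fin (Dv i) → ℝ))
    (v : ((i : Fin N) → Fin (Dv i) → ℝ) → ((i : Fin N) → Fin (Dv i) → ℝ))
    (g : ((i : Fin N) → Fin (Dv i) → ℝ) → Fin R → ℝ)
    (Gg : ((i : Fin N) → Fin (Dv i) → ℝ) → Fin R → ((i : Fin N) → Fin (Dv i) → ℝ))
    (xbar : (i : Fin N) → Fin (Dv i) → ℝ) (lambar : Fin R → ℝ) : Prop :=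
  xbar ∈ jointSet Xs ∧ (∀ r, 0 ≤ lambar r) ∧
    ∀ x ∈ jointSet Xs, ∀ lam : Fin R → ℝ, (∀ r, 0 ≤ lam r) →
      pairE (x - xbar) (v xbar - gradT Gg xbar lambar) +
        (∑ r, (lam r - lambar r) * g xbar r) ≤ 0

/-- `x̄` solves the variational inequality `VI(Q, v)`. -/
def VISol {N R : ℕ} {Dv : Fin N → ℕ} (Xs : (i : Fin N) → Set (Fin (Dv i) → ℝ))
    (g : ((i : Fin N) → Fin (Dv i) → ℝ) → Fin R → ℝ)
    (v : ((i : Fin N) → Fin (Dv i) → ℝ) → ((i : Fin N) → Fin (Dv i) → ℝ))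
    (xbar : (i : Fin N) → Fin (Dv i) → ℝ) : Prop :=
  xbar ∈ feasSet Xs g ∧ ∀ x ∈ feasSet Xs g, pairE (x - xbar) (v xbar) ≤ 0


/-! ### Auxiliary lemmas -/

lemma pairE_eq' {N : ℕ} {Dv : Fin N → ℕ} (x y : (i : Fin N) → Fin (Dv i) → ℝ) :
    pairE x y = ∑ i, ∑ j, x i j * y i j := rfl

lemma pairE_comm' {N : ℕ} {Dv : Fin N → ℕ} (x y : (i : Fin N) → Fin (Dv i) → ℝ) :
    pairE x y = pairE y x := by
  simp [pairE_eq', mul_comm]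

lemma pairE_sub_left' {N : ℕ} {Dv : Fin N → ℕ} (x y z : (i : Fin N) → Fin (Dv i) → ℝ) :
    pairE (x - y) z = pairE x z - pairE y z := by
  simp [pairE_eq', sub_mul, Finset.sum_sub_distrib]

lemma pairE_sub_right' {N : ℕ} {Dv : Fin N → ℕ} (x y z : (i : Fin N) → Fin (Dv i) → ℝ) :
    pairE x (y - z) = pairE x y - pairE x z := by
  simp [pairE_eq', mul_sub, Finset.sum_sub_distrib]

lemma pairE_comb' {N : ℕ} {Dv : Fin N → ℕ} (a b : ℝ) (x y c : (i : Fin N) → Fin (Dv i) → ℝ) :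
    pairE (a • x + b • y) c = a * pairE x c + b * pairE y c := by
  simp [pairE_eq', Finset.mul_sum, add_mul, Finset.sum_add_distrib, mul_assoc]

lemma pairE_gradT' {N R : ℕ} {Dv : Fin N → ℕ}
    (Gg : ((i : Fin N) → Fin (Dv i) → ℝ) → Fin R → ((i : Fin N) → Fin (Dv i) → ℝ))
    (x : (i : Fin N) → Fin (Dv i) → ℝ) (lam : Fin R → ℝ)
    (d : (i : Fin N) → Fin (Dv i) → ℝ) :
    pairE d (gradT Gg x lam) = ∑ r, lam r * pairE d (Gg x r) := by
  simp only [pairE_eq', gradT, Finset.mul_sum]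
  rw [Finset.sum_comm]
  apply Finset.sum_congr rfl; intro i _
  rw [Finset.sum_comm]
  apply Finset.sum_congr rfl; intro j _
  apply Finset.sum_congr rfl; intro r _
  ring

/-- the pairing with a fixed vector as a continuous linear map -/
def pairCLM {N : ℕ} {Dv : Fin N → ℕ} (c : (i : Fin N) → Fin (Dv i) → ℝ) :
    ((i : Fin N) → Fin (Dv i) → ℝ) →L[ℝ] ℝ :=
  ∑ i, ∑ j, c i j • ((ContinuousLinearMap.proj j).comp
    (ContinuousLinearMap.proj (R := ℝ) (φ := fun i => Fin (Dv i) → ℝ) i))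

lemma pairCLM_apply {N : ℕ} {Dv : Fin N → ℕ} (c x : (i : Fin N) → Fin (Dv i) → ℝ) :
    pairCLM c x = pairE x c := by
  simp [pairCLM, pairE_eq', ContinuousLinearMap.sum_apply, mul_comm]

lemma hasFDerivAt_pairE {N : ℕ} {Dv : Fin N → ℕ} (c : (i : Fin N) → Fin (Dv i) → ℝ)
    (x : (i : Fin N) → Fin (Dv i) → ℝ) :
    HasFDerivAt (fun z => pairE z c) (pairCLM c) x := by
  have h : (fun z => pairE z c) = fun z => pairCLM c z := by
    funext z; rw [pairCLM_apply]
  rw [h]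
  exact (pairCLM c).hasFDerivAt

lemma dirDeriv_le {E : Type*} [NormedAddCommGroup E] [NormedSpace ℝ E]
    {f : E → ℝ} {L : E →L[ℝ] ℝ} {x d : E} {c : ℝ}
    (hf : HasFDerivAt f L x)
    (hb : ∀ t : ℝ, 0 < t → t ≤ 1 → (f (x + t • d) - f x) / t ≤ c) : L d ≤ c := by
  have hline : HasDerivAt (fun t : ℝ => x + t • d) d 0 := by
    simpa using ((hasDerivAt_id (0:ℝ)).smul_const d).const_add x
  have hx0 : x + (0:ℝ) • d = x := by simp
  have hphi : HasDerivAt (fun t : ℝ => f (x + t • d)) (L d) 0 := by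
    have hf' : HasFDerivAt f L ((fun t : ℝ => x + t • d) 0) := by simpa using hf
    exact hf'.comp_hasDerivAt 0 hline
  have hsl := hasDerivAt_iff_tendsto_slope.mp hphi
  have hmono : nhdsWithin (0:ℝ) (Set.Ioi 0) ≤ nhdsWithin 0 {(0:ℝ)}ᶜ :=
    nhdsWithin_mono 0 (fun t ht => ne_of_gt ht)
  have hsl2 : Tendsto (slope (fun t : ℝ => f (x + t • d)) 0)
      (nhdsWithin (0:ℝ) (Set.Ioi 0)) (nhds (L d)) := hsl.mono_left hmono
  refine le_of_tendsto hsl2 ?_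
  filter_upwards [Ioc_mem_nhdsGT_of_mem (by norm_num : (0:ℝ) ∈ Set.Ico 0 1)] with t ht
  have h := hb t ht.1 ht.2
  rw [div_eq_inv_mul] at h
  simpa [slope, hx0] using h

lemma grad_ineq {E : Type*} [NormedAddCommGroup E] [NormedSpace ℝ E] {S : Set E} {f : E → ℝ}
    (hconv : ConvexOn ℝ S f) {x y : E} (hx : x ∈ S) (hy : y ∈ S)
    {L : E →L[ℝ] ℝ} (hL : HasFDerivAt f L x) : L (y - x) ≤ f y - f x := by
  apply dirDeriv_le hL
  intro t ht0 ht1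
  have hco : x + t • (y - x) = (1 - t) • x + t • y := by
    rw [smul_sub, sub_smul, one_smul]; abel
  rw [hco, div_le_iff₀ ht0]
  have h := hconv.2 hx hy (by linarith : (0:ℝ) ≤ 1 - t) ht0.le (by ring)
  simp only [smul_eq_mul] at h
  nlinarith

lemma comb_lt {a b s1 s2 t1 t2 : ℝ} (ha : 0 ≤ a) (hb : 0 ≤ b) (hab : a + b = 1)
    (h1 : s1 < t1) (h2 : s2 < t2) : a * s1 + b * s2 < a * t1 + b * t2 := by
  rcases ha.eq_or_lt with h | h
  · have hb1 : b = 1 := by linarith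
    subst hb1; rw [← h]; simpa using h2
  · have h1' := mul_lt_mul_of_pos_left h1 h
    have h2' := mul_le_mul_of_nonneg_left h2.le hb
    linarith

lemma F_decomp {R : ℕ} (F : (ℝ × (Fin R → ℝ)) →L[ℝ] ℝ) (s : ℝ) (z : Fin R → ℝ) :
    F (s, z) = s * F (1, 0) + ∑ r, z r * F (0, Pi.single r 1) := by
  have h1 : ((s, z) : ℝ × (Fin R → ℝ)) =
      s • ((1:ℝ), (0 : Fin R → ℝ)) + ∑ r, z r • ((0:ℝ), (Pi.single r 1 : Fin R → ℝ)) := by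
    have h2 : (∑ r, z r • ((0:ℝ), (Pi.single r 1 : Fin R → ℝ))) = ((0:ℝ), z) := by
      apply Prod.ext
      · rw [Prod.fst_sum]; simp
      · rw [Prod.snd_sum]
        have h3 : ∀ r : Fin R, (z r • ((0:ℝ), (Pi.single r 1 : Fin R → ℝ))).2
            = Pi.single r (z r) := by
          intro r
          funext j
          by_cases hj : j = r <;> simp [hj, Pi.single_apply]
        rw [Finset.sum_congr rfl fun r _ => h3 r]
        exact Finset.univ_sum_single z
    rw [h2]
    apply Prod.ext <;> simp
  rw [h1, map_add, map_smul, map_sum]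
  rw [Finset.sum_congr rfl fun r _ => map_smul F (z r) ((0:ℝ), (Pi.single r 1 : Fin R → ℝ))]
  simp [smul_eq_mul]

/-- **Decoupling via the Lagrangian: `VI(Q,v)` vs. the extended `VI`.**
Under Assumptions 1, 2 and Slater's condition, for `x̄ ∈ Q` the following are equivalent:
(1) `x̄` solves `VI(Q, v)`;
(2) there is `λ̄ ∈ ℝ^R_{≥0}` such that `(x̄, λ̄)` solves `VI(X × ℝ^R_{≥0}, ṽ)`, where
`ṽ(x, λ) = (v(x) − ∇g(x)ᵀλ, g(x))`. -/
theorem vi_kkt_equivalence {N R : ℕ} {Dv : Fin N → ℕ}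
    (Xs : (i : Fin N) → Set (Fin (Dv i) → ℝ))
    (hXne : ∀ i, (Xs i).Nonempty) (hXcomp : ∀ i, IsCompact (Xs i))
    (hXconv : ∀ i, Convex ℝ (Xs i))
    (u : Fin N → ((i : Fin N) → Fin (Dv i) → ℝ) → ℝ)
    (v : ((i : Fin N) → Fin (Dv i) → ℝ) → ((i : Fin N) → Fin (Dv i) → ℝ))
    -- Assumption 1
    (hconc : ∀ (i : Fin N) (x : (i : Fin N) → Fin (Dv i) → ℝ),
      ConcaveOn ℝ (Xs i) (fun xi => u i (Function.update x i xi)))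
    (hgrad : ∀ (i : Fin N) (x : (i : Fin N) → Fin (Dv i) → ℝ),
      ∃ L : (Fin (Dv i) → ℝ) →L[ℝ] ℝ,
        HasFDerivAt (fun xi => u i (Function.update x i xi)) L (x i) ∧
        ∀ w, L w = pairB (v x i) w)
    (hvcont : ContinuousOn v (jointSet Xs))
    -- Assumption 2
    (g : ((i : Fin N) → Fin (Dv i) → ℝ) → Fin R → ℝ)
    (Gg : ((i : Fin N) → Fin (Dv i) → ℝ) → Fin R → ((i : Fin N) → Fin (Dv i) → ℝ))
    (hgconv : ∀ r, ConvexOn ℝ (jointSet Xs) (fun x => g x r))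
    (hgdiff : ∀ (x : (i : Fin N) → Fin (Dv i) → ℝ) (r : Fin R),
      ∃ L : ((i : Fin N) → Fin (Dv i) → ℝ) →L[ℝ] ℝ,
        HasFDerivAt (fun z => g z r) L x ∧ ∀ w, L w = pairE (Gg x r) w)
    (hGgcont : Continuous Gg)
    (hQne : (feasSet Xs g).Nonempty)
    -- Assumption 3 (Slater)
    (hSlater : ∃ x ∈ intrinsicInterior ℝ (jointSet Xs), ∀ r, g x r < 0)
    (xbar : (i : Fin N) → Fin (Dv i) → ℝ) (hxbar : xbar ∈ feasSet Xs g) :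
    VISol Xs g v xbar ↔ ∃ lambar : Fin R → ℝ, extVISol Xs v g Gg xbar lambar := by
  classical
  choose Lg hLgD hLgV using hgdiff
  obtain ⟨hxX, hxg⟩ := hxbar
  constructor
  · rintro ⟨-, hopt⟩
    set fstar := pairE xbar (v xbar) with hfstar
    have hopt' : ∀ x ∈ feasSet Xs g, pairE x (v xbar) ≤ fstar := by
      intro x hx
      have h := hopt x hx
      rw [pairE_sub_left'] at h
      linarith
    set A : Set (ℝ × (Fin R → ℝ)) :=
      {p | ∃ x, (∀ i, x i ∈ Xs i) ∧ p.1 < pairE x (v xbar) ∧ ∀ r, g x r < p.2 r} with hA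
    have hAopen : IsOpen A := by
      have hAeq : A = ⋃ x ∈ jointSet Xs,
          (Set.Iio (pairE x (v xbar))) ×ˢ (Set.univ.pi fun r => Set.Ioi (g x r)) := by
        ext p
        simp only [hA, Set.mem_setOf_eq, Set.mem_iUnion, Set.mem_prod, Set.mem_Iio,
          Set.mem_pi, Set.mem_univ, Set.mem_Ioi, forall_true_left, jointSet, exists_prop]
      rw [hAeq]
      exact isOpen_biUnion fun x _ =>
        (isOpen_Iio.prod (isOpen_set_pi Set.finite_univ fun r _ => isOpen_Ioi))
    have hAconv : Convex ℝ A := by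
      rintro p ⟨x1, hx1, hs1, hz1⟩ q ⟨x2, hx2, hs2, hz2⟩ a b ha hb hab
      refine ⟨a • x1 + b • x2, ?_, ?_, ?_⟩
      · intro i
        have h : (a • x1 + b • x2) i = a • x1 i + b • x2 i := rfl
        rw [h]
        exact hXconv i (hx1 i) (hx2 i) ha hb hab
      · have hcomb := pairE_comb' a b x1 x2 (v xbar)
        have hfst : (a • p + b • q).1 = a * p.1 + b * q.1 := by simp
        rw [hcomb, hfst]
        exact comb_lt ha hb hab hs1 hs2
      · intro r
        have hgc := (hgconv r).2 (hx1 : x1 ∈ jointSet Xs) (hx2 : x2 ∈ jointSet Xs) ha hb hab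
        simp only [smul_eq_mul] at hgc
        have hsnd : (a • p + b • q).2 r = a * p.2 r + b * q.2 r := by simp
        rw [hsnd]
        calc g (a • x1 + b • x2) r ≤ a * g x1 r + b * g x2 r := hgc
          _ < a * p.2 r + b * q.2 r := comb_lt ha hb hab (hz1 r) (hz2 r)
    have hnotin : ((fstar, (0 : Fin R → ℝ)) : ℝ × (Fin R → ℝ)) ∉ A := by
      rintro ⟨x, hxmem, hs, hz⟩
      have hfeas : x ∈ feasSet Xs g := ⟨hxmem, fun r => (hz r).le⟩
      have := hopt' x hfeas
      simp only at hs
      linarith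
    obtain ⟨F, hF⟩ := geometric_hahn_banach_open_point hAconv hAopen hnotin
    set a := F (1, (0 : Fin R → ℝ)) with ha_def
    set b := fun r : Fin R => F (0, (Pi.single r 1 : Fin R → ℝ)) with hb_def
    have hdec : ∀ (s : ℝ) (z : Fin R → ℝ), F (s, z) = s * a + ∑ r, z r * b r :=
      fun s z => F_decomp F s z
    have hFp : ∀ (s : ℝ) (z : Fin R → ℝ),
        (∃ x, (∀ i, x i ∈ Xs i) ∧ s < pairE x (v xbar) ∧ ∀ r, g x r < z r) →
        s * a + ∑ r, z r * b r < fstar * a := by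
      intro s z hmem
      have h := hF (s, z) hmem
      rw [hdec, hdec] at h
      simpa using h
    set z0 : Fin R → ℝ := fun r => g xbar r + 1 with hz0
    set S0 := ∑ r, z0 r * b r with hS0def
    have hbase : ∀ t : ℝ, 0 < t → (fstar - t) * a + S0 < fstar * a := by
      intro t ht
      exact hFp _ _ ⟨xbar, hxX, by linarith, fun r => by simp [hz0]⟩
    have ha0 : 0 ≤ a := by
      by_contra hcon
      push_neg at hcon
      have h1 := hbase 1 one_pos
      have hS0lt : S0 < a := by nlinarith
      have hS0neg : S0 < 0 := lt_trans hS0lt hcon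
      have h2 := hbase (S0 / a) (div_pos_of_neg_of_neg hS0neg hcon)
      have h3 : (S0 / a) * a = S0 := div_mul_cancel₀ _ (ne_of_lt hcon)
      nlinarith
    have hb0 : ∀ r, b r ≤ 0 := by
      intro r
      by_contra hcon
      push_neg at hcon
      have hineq : ∀ t : ℝ, 0 < t → (fstar - 1) * a + S0 + t * b r < fstar * a := by
        intro t ht
        have hm := hFp (fstar - 1) (fun r' => z0 r' + (if r' = r then t else 0))
          ⟨xbar, hxX, by linarith, fun r' => by
            by_cases hr : r' = r <;> simp only [hr, hz0, if_pos, if_neg, ite_true,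
              ite_false] <;> linarith⟩
        have hsum : ∑ r', (z0 r' + (if r' = r then t else 0)) * b r'
            = S0 + t * b r := by
          simp only [add_mul, Finset.sum_add_distrib, hS0def]
          congr 1
          simp [ite_mul, Finset.sum_ite_eq']
        rw [hsum] at hm
        linarith
      have h1 := hineq 1 one_pos
      set gap := fstar * a - ((fstar - 1) * a + S0) with hgap
      have hgappos : 0 < gap := by nlinarith
      have h2 := hineq (gap / b r) (div_pos hgappos hcon)
      have h3 : (gap / b r) * b r = gap := div_mul_cancel₀ _ (ne_of_gt hcon)
      nlinarith
    have hmain : ∀ x, (∀ i, x i ∈ Xs i) →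
        pairE x (v xbar) * a + ∑ r, g x r * b r ≤ fstar * a := by
      intro x hx
      apply le_of_forall_pos_lt_add
      intro ε' hε'
      set K := a + ∑ r, -(b r) with hK
      have hK0 : 0 ≤ K := add_nonneg ha0 (Finset.sum_nonneg fun r _ => by linarith [hb0 r])
      set ε := ε' / (K + 1) with hε
      have hεpos : 0 < ε := div_pos hε' (by linarith)
      have h := hFp (pairE x (v xbar) - ε) (fun r => g x r + ε)
        ⟨x, hx, by linarith, fun r => by show g x r < g x r + ε; linarith⟩
      have hsum : ∑ r, (g x r + ε) * b r = (∑ r, g x r * b r) + ε * (∑ r, b r) := by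
        rw [Finset.mul_sum, ← Finset.sum_add_distrib]
        apply Finset.sum_congr rfl
        intro r _
        ring
      rw [hsum] at h
      have hexp : (pairE x (v xbar) - ε) * a = pairE x (v xbar) * a - ε * a := by ring
      have hKsum : ∑ r, -(b r) = -(∑ r, b r) := by simp
      have hεK : ε * (K + 1) = ε' := div_mul_cancel₀ _ (by linarith : K + 1 ≠ 0)
      have hεK' : ε * K ≤ ε' := by nlinarith
      have hKval : ε * a - ε * (∑ r, b r) = ε * K := by
        rw [hK, hKsum]; ring
      linarith [h, hexp, hKval, hεK']
    have hapos : 0 < a := by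
      rcases ha0.eq_or_lt with heq | h
      · exfalso
        obtain ⟨xs, hxsI, hxsg⟩ := hSlater
        have hxsX : ∀ i, xs i ∈ Xs i := intrinsicInterior_subset hxsI
        have h1 := hmain xs hxsX
        rw [← heq] at h1
        simp only [mul_zero, zero_add] at h1
        have hterm : ∀ r, 0 ≤ g xs r * b r := by
          intro r
          rw [← neg_mul_neg]
          exact mul_nonneg (by linarith [hxsg r]) (by linarith [hb0 r])
        have hsum0 : ∑ r, g xs r * b r = 0 :=
          le_antisymm (by linarith) (Finset.sum_nonneg fun r _ => hterm r)
        have hb_eq : ∀ r, b r = 0 := by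
          intro r
          have h0 := (Finset.sum_eq_zero_iff_of_nonneg (fun r _ => hterm r)).mp hsum0 r
            (Finset.mem_univ r)
          rcases mul_eq_zero.mp h0 with h' | h'
          · exact absurd h' (ne_of_lt (hxsg r))
          · exact h'
        have hp0 : ((fstar - 1, z0) : ℝ × (Fin R → ℝ)) ∈ A :=
          ⟨xbar, hxX, by show fstar - 1 < pairE xbar (v xbar); linarith, fun r => by simp [hz0]⟩
        have hcontr := hF _ hp0
        rw [hdec, hdec] at hcontr
        simp only [hb_eq, mul_zero, Finset.sum_const_zero, add_zero, ← heq] at hcontr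
        linarith
      · exact h
    set lambar : Fin R → ℝ := fun r => -(b r) / a with hlambar
    have hlamnn : ∀ r, 0 ≤ lambar r := fun r => div_nonneg (by linarith [hb0 r]) hapos.le
    have hLag : ∀ x, (∀ i, x i ∈ Xs i) →
        pairE x (v xbar) - ∑ r, lambar r * g x r ≤ fstar := by
      intro x hx
      have hexp : (∑ r, lambar r * g x r) * a = -(∑ r, g x r * b r) := by
        rw [Finset.sum_mul, ← Finset.sum_neg_distrib]
        apply Finset.sum_congr rfl
        intro r _
        show -(b r) / a * g x r * a = -(g x r * b r)
        rw [div_mul_eq_mul_div, div_mul_cancel₀ _ (ne_of_gt hapos)]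
        ring
      have key : (pairE x (v xbar) - ∑ r, lambar r * g x r) * a ≤ fstar * a := by
        have h := hmain x hx
        nlinarith [h, hexp]
      exact le_of_mul_le_mul_right key hapos
    have hcs : ∑ r, lambar r * g xbar r = 0 := by
      have h1 := hLag xbar hxX
      have h2 : ∑ r, lambar r * g xbar r ≤ 0 :=
        Finset.sum_nonpos fun r _ => mul_nonpos_iff.mpr (Or.inl ⟨hlamnn r, hxg r⟩)
      have h3 : 0 ≤ ∑ r, lambar r * g xbar r := by
        rw [hfstar] at h1
        linarith
      linarith
    set L : ((i : Fin N) → Fin (Dv i) → ℝ) →L[ℝ] ℝ :=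
      pairCLM (v xbar) - ∑ r, lambar r • Lg xbar r with hLdef
    have hMder : HasFDerivAt (fun z => pairE z (v xbar) - ∑ r, lambar r * g z r) L xbar :=
      (hasFDerivAt_pairE (v xbar) xbar).sub
        (HasFDerivAt.fun_sum fun r _ => (hLgD xbar r).const_mul (lambar r))
    have hLval : ∀ d, L d = pairE d (v xbar) - ∑ r, lambar r * pairE (Gg xbar r) d := by
      intro d
      simp [hLdef, ContinuousLinearMap.sub_apply, ContinuousLinearMap.sum_apply,
        pairCLM_apply, hLgV]
    have hstat : ∀ x, (∀ i, x i ∈ Xs i) →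
        pairE (x - xbar) (v xbar) - ∑ r, lambar r * pairE (Gg xbar r) (x - xbar) ≤ 0 := by
      intro x hx
      rw [← hLval]
      apply dirDeriv_le hMder
      intro t ht0 ht1
      have hmem : ∀ i, (xbar + t • (x - xbar)) i ∈ Xs i := by
        intro i
        have hco : (xbar + t • (x - xbar)) i = (1 - t) • xbar i + t • x i := by
          funext j
          simp only [Pi.add_apply, Pi.smul_apply, Pi.sub_apply, smul_eq_mul]
          ring
        rw [hco]
        exact hXconv i (hxX i) (hx i) (by linarith) ht0.le (by ring)
      have h1 := hLag _ hmem
      have h2 : pairE xbar (v xbar) - ∑ r, lambar r * g xbar r = fstar := by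
        rw [hcs, hfstar]; ring
      apply div_nonpos_iff.mpr
      right
      exact ⟨by linarith, ht0.le⟩
    refine ⟨lambar, hxX, hlamnn, ?_⟩
    intro x hxmem lam hlam
    rw [pairE_sub_right', pairE_gradT']
    have hsum1 : ∑ r, (lam r - lambar r) * g xbar r
        = ∑ r, lam r * g xbar r - ∑ r, lambar r * g xbar r := by
      rw [← Finset.sum_sub_distrib]
      apply Finset.sum_congr rfl
      intro r _
      ring
    have hsum2 : ∑ r, lam r * g xbar r ≤ 0 :=
      Finset.sum_nonpos fun r _ => mul_nonpos_iff.mpr (Or.inl ⟨hlam r, hxg r⟩)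
    have h3 := hstat x hxmem
    have hcommsum : ∑ r, lambar r * pairE (x - xbar) (Gg xbar r)
        = ∑ r, lambar r * pairE (Gg xbar r) (x - xbar) := by
      apply Finset.sum_congr rfl
      intro r _
      rw [pairE_comm']
    rw [hsum1, hcommsum]
    linarith
  · rintro ⟨lambar, hxX', hlamnn, hext⟩
    refine ⟨⟨hxX, hxg⟩, ?_⟩
    intro x hx
    have hcs' : 0 ≤ ∑ r, lambar r * g xbar r := by
      have h := hext xbar hxX' (fun _ => 0) (fun r => le_refl 0)
      have h0 : pairE (xbar - xbar) (v xbar - gradT Gg xbar lambar) = 0 := by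
        simp [pairE_eq']
      rw [h0, zero_add] at h
      have hsum : ∑ r, ((0:ℝ) - lambar r) * g xbar r = -∑ r, lambar r * g xbar r := by
        rw [← Finset.sum_neg_distrib]
        apply Finset.sum_congr rfl
        intro r _
        ring
      rw [hsum] at h
      linarith
    have hmain := hext x hx.1 lambar hlamnn
    have h00 : ∑ r, (lambar r - lambar r) * g xbar r = 0 := by simp
    rw [h00, add_zero, pairE_sub_right', pairE_gradT'] at hmain
    have hgi : ∀ r, pairE (Gg xbar r) (x - xbar) ≤ g x r - g xbar r := by
      intro r
      have h := grad_ineq (hgconv r) (hxX : xbar ∈ jointSet Xs) (hx.1 : x ∈ jointSet Xs)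
        (hLgD xbar r)
      rw [hLgV xbar r] at h
      exact h
    have hsum3 : ∑ r, lambar r * pairE (x - xbar) (Gg xbar r)
        ≤ ∑ r, lambar r * (g x r - g xbar r) := by
      apply Finset.sum_le_sum
      intro r _
      rw [pairE_comm']
      exact mul_le_mul_of_nonneg_left (hgi r) (hlamnn r)
    have hsum4 : ∑ r, lambar r * (g x r - g xbar r)
        = ∑ r, lambar r * g x r - ∑ r, lambar r * g xbar r := by
      rw [← Finset.sum_sub_distrib]
      apply Finset.sum_congr rfl
      intro r _
      ring
    have hsum5 : ∑ r, lambar r * g x r ≤ 0 :=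
      Finset.sum_nonpos fun r _ => mul_nonpos_iff.mpr (Or.inl ⟨hlamnn r, hx.2 r⟩)
    rw [pairE_sub_left'] at hmain ⊢
    linarith
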